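/- Let R be a reduced root system in ℝ^N with positive subsystem R₊, W-invariant multiplicity function κ with κ(α) > 0, and γ = Σ_{α∈R₊} κ(α). Assume Span(R) = ℝ^N and that W acts irreducibly on ℝ^N. Let β > 0, a ∈ ℝ, y ∈ ℝ^N, and define D(x,y) = exp(|x|²|y|²/(2γ))(1 + a⟪x,y⟫). Then for every x ∈ ℝ^N with ⟪α,x⟫ ≠ 0 for all α ∈ R₊ and every coordinate index i, the Dunkl operator in the x variable satisfies T_i[D(·,y)](x) = [ x_i (|y|²/γ)(1 + a⟪x,y⟫) + a(1 + βγ/N) y_i ] exp(|x|²|y|²/(2γ)). -/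

import Mathlib

open scoped RealInnerProductSpace BigOperators
open MeasureTheory

noncomputable section

/-- Reflection of `x` along the vector `α`. -/
def sigmaRefl {N : ℕ} (α x : EuclideanSpace ℝ (Fin N)) : EuclideanSpace ℝ (Fin N) :=
  x - (2 * ⟪α, x⟫ / ⟪α, α⟫) • α

/-- A reduced root system in `ℝ^N`, together with a choice of positivity direction `m`. -/
structure DunklRootSystem (N : ℕ) where
  R : Finset (EuclideanSpace ℝ (Fin N))
  nonzero : ∀ α ∈ R, α ≠ 0
  invariant : ∀ α ∈ R, ∀ ξ ∈ R, sigmaRefl α ξ ∈ R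
  reduced : ∀ α ∈ R, ∀ ξ ∈ R, ∀ a : ℝ, ξ = a • α → a = 1 ∨ a = -1
  m : EuclideanSpace ℝ (Fin N)
  m_transverse : ∀ α ∈ R, ⟪α, m⟫ ≠ 0

/-- The positive subsystem `R₊`. -/
def DunklRootSystem.pos {N : ℕ} (S : DunklRootSystem N) : Finset (EuclideanSpace ℝ (Fin N)) :=
  S.R.filter fun α => 0 < ⟪α, S.m⟫

/-- The reflection group `W`, as a subgroup of the group of linear isometries of `ℝ^N`. -/
def DunklRootSystem.W {N : ℕ} (S : DunklRootSystem N) :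
    Subgroup (EuclideanSpace ℝ (Fin N) ≃ₗᵢ[ℝ] EuclideanSpace ℝ (Fin N)) :=
  Subgroup.closure { g | ∃ α ∈ S.R, ⇑g = sigmaRefl α }

/-- The Dunkl operator `T_i` (with renormalized multiplicities `κ` and coupling `β`). -/
def dunklT {N : ℕ} (S : DunklRootSystem N) (κ : EuclideanSpace ℝ (Fin N) → ℝ) (β : ℝ)
    (i : Fin N) (f : EuclideanSpace ℝ (Fin N) → ℝ) (x : EuclideanSpace ℝ (Fin N)) : ℝ :=
  fderiv ℝ f x (EuclideanSpace.single i 1) +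
    (β / 2) * ∑ α ∈ S.pos, α i * κ α * ((f x - f (sigmaRefl α x)) / ⟪α, x⟫)

section Aux
variable {N : ℕ}
local notation "E" => EuclideanSpace ℝ (Fin N)

lemma inner_self_ne_zero' {α : E} (hα : α ≠ 0) : ⟪α, α⟫ ≠ 0 :=
  fun h => hα ((inner_self_eq_zero (𝕜 := ℝ)).1 h)

lemma sigmaRefl_inner {α : E} (hα : α ≠ 0) (u v : E) :
    ⟪sigmaRefl α u, sigmaRefl α v⟫ = ⟪u, v⟫ := by
  have hA := inner_self_ne_zero' hα
  rw [sigmaRefl, sigmaRefl, inner_sub_left, inner_sub_right, inner_sub_right,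
    real_inner_smul_left, real_inner_smul_left, real_inner_smul_right,
    real_inner_smul_right, real_inner_comm u α, real_inner_comm v α]
  generalize ⟪α,α⟫ = A at hA ⊢
  generalize ⟪α,u⟫ = p
  generalize ⟪α,v⟫ = q
  field_simp
  ring

lemma sigmaRefl_involutive {α : E} (hα : α ≠ 0) (x : E) :
    sigmaRefl α (sigmaRefl α x) = x := by
  have hA := inner_self_ne_zero' hα
  rw [sigmaRefl, sigmaRefl, inner_sub_right, real_inner_smul_right]
  have h : (2 * (⟪α,x⟫ - 2 * ⟪α,x⟫ / ⟪α,α⟫ * ⟪α,α⟫) / ⟪α,α⟫) = -(2 * ⟪α,x⟫ / ⟪α,α⟫) := by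
    generalize ⟪α,α⟫ = A at hA ⊢
    field_simp
    ring
  rw [h, neg_smul, sub_neg_eq_add, sub_add_cancel]

lemma sigmaRefl_norm {α : E} (hα : α ≠ 0) (x : E) : ‖sigmaRefl α x‖ = ‖x‖ := by
  have := sigmaRefl_inner hα x x
  rw [real_inner_self_eq_norm_sq, real_inner_self_eq_norm_sq] at this
  nlinarith [norm_nonneg (sigmaRefl α x), norm_nonneg x]

lemma sigmaRefl_self {α : E} (hα : α ≠ 0) : sigmaRefl α α = -α := by
  have hA := inner_self_ne_zero' hα
  rw [sigmaRefl, mul_div_assoc, div_self hA, mul_one, two_smul]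
  abel

/-- `sigmaRefl α` as a linear map. -/
def sigmaL (α : E) : E →ₗ[ℝ] E where
  toFun := sigmaRefl α
  map_add' u v := by
    simp only [sigmaRefl, inner_add_right]
    rw [mul_add, add_div, add_smul]
    abel
  map_smul' t v := by
    simp only [sigmaRefl, real_inner_smul_right, RingHom.id_apply, smul_sub, smul_smul]
    congr 1
    ring_nf

lemma sigmaL_apply (α x : E) : sigmaL α x = sigmaRefl α x := rfl

section RS
variable (S : DunklRootSystem N)

lemma neg_mem_R {α : E} (hα : α ∈ S.R) : -α ∈ S.R := by
  have := S.invariant α hα α hα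
  rwa [sigmaRefl_self (S.nonzero α hα)] at this

/-- Sum over the whole root system equals twice the sum over positive roots,
for even functions. -/
lemma sum_R_eq {M : Type*} [AddCommMonoid M] (F : E → M) (hF : ∀ α ∈ S.R, F (-α) = F α) :
    ∑ α ∈ S.R, F α = ∑ α ∈ S.pos, F α + ∑ α ∈ S.pos, F α := by
  classical
  rw [← Finset.sum_filter_add_sum_filter_not S.R (fun α => 0 < ⟪α, S.m⟫) F]
  congr 1
  refine Finset.sum_nbij' (fun α => -α) (fun α => -α) ?_ ?_ ?_ ?_ ?_
  · intro α hα
    rw [Finset.mem_filter] at hα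
    rw [DunklRootSystem.pos, Finset.mem_filter]
    obtain ⟨h1, h2⟩ := hα
    have hne := S.m_transverse α h1
    refine ⟨neg_mem_R S h1, ?_⟩
    rw [inner_neg_left]
    have : ⟪α, S.m⟫ < 0 := lt_of_le_of_ne (not_lt.1 h2) hne
    linarith
  · intro α hα
    rw [DunklRootSystem.pos, Finset.mem_filter] at hα
    rw [Finset.mem_filter]
    obtain ⟨h1, h2⟩ := hα
    refine ⟨neg_mem_R S h1, ?_⟩
    rw [inner_neg_left]
    push_neg
    linarith
  · intro α _; simp
  · intro α _; simp
  · intro α hα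
    exact (hF α (Finset.mem_filter.1 hα).1).symm ▸ rfl
end RS

section Aop
variable (S : DunklRootSystem N) (κ : EuclideanSpace ℝ (Fin N) → ℝ)

/-- The operator `A v = ∑_{α ∈ R} (κ α / ⟪α,α⟫) ⟪α,v⟫ α`. -/
def Aop : EuclideanSpace ℝ (Fin N) →ₗ[ℝ] EuclideanSpace ℝ (Fin N) where
  toFun v := ∑ α ∈ S.R, (κ α / ⟪α, α⟫ * ⟪α, v⟫) • α
  map_add' u v := by
    rw [← Finset.sum_add_distrib]
    refine Finset.sum_congr rfl fun α _ => ?_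
    rw [inner_add_right, mul_add, add_smul]
  map_smul' t v := by
    rw [RingHom.id_apply, Finset.smul_sum]
    refine Finset.sum_congr rfl fun α _ => ?_
    rw [real_inner_smul_right, smul_smul]
    ring_nf

lemma Aop_apply (v : E) : Aop S κ v = ∑ α ∈ S.R, (κ α / ⟪α, α⟫ * ⟪α, v⟫) • α := rfl

lemma Aop_symm : (Aop S κ).IsSymmetric := by
  intro u v
  rw [Aop_apply, Aop_apply, sum_inner, inner_sum]
  refine Finset.sum_congr rfl fun α _ => ?_
  rw [real_inner_smul_left, real_inner_smul_right, real_inner_comm α u]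
  ring

/-- `A` commutes with each generating reflection. -/
lemma Aop_comm_refl (hκinv : ∀ α ∈ S.R, ∀ ξ ∈ S.R, κ (sigmaRefl α ξ) = κ ξ)
    {α₀ : E} (hα₀ : α₀ ∈ S.R) (v : E) :
    Aop S κ (sigmaRefl α₀ v) = sigmaRefl α₀ (Aop S κ v) := by
  have hα₀ne := S.nonzero α₀ hα₀
  have hadj : ∀ u w : E, ⟪u, sigmaRefl α₀ w⟫ = ⟪sigmaRefl α₀ u, w⟫ := by
    intro u w
    conv_lhs => rw [← sigmaRefl_involutive hα₀ne u]
    rw [sigmaRefl_inner hα₀ne]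
  have reindex : ∑ α ∈ S.R, (κ α / ⟪α, α⟫ * ⟪α, sigmaRefl α₀ v⟫) • α
      = ∑ α ∈ S.R, (κ α / ⟪α, α⟫ * ⟪α, v⟫) • sigmaRefl α₀ α := by
    refine Finset.sum_nbij' (fun α => sigmaRefl α₀ α) (fun α => sigmaRefl α₀ α)
      (fun α hα => S.invariant α₀ hα₀ α hα) (fun α hα => S.invariant α₀ hα₀ α hα)
      (fun α _ => sigmaRefl_involutive hα₀ne α) (fun α _ => sigmaRefl_involutive hα₀ne α)
      (fun α hα => ?_)
    rw [hκinv α₀ hα₀ α hα, sigmaRefl_inner hα₀ne, sigmaRefl_involutive hα₀ne,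
      ← hadj α v, hadj α v]
  rw [Aop_apply, Aop_apply, reindex]
  conv_rhs => rw [← sigmaL_apply, map_sum]
  refine Finset.sum_congr rfl fun α _ => ?_
  rw [_root_.map_smul, sigmaL_apply]

/-- `A` commutes with all of `W`. -/
lemma Aop_comm_W (hκinv' : ∀ α ∈ S.R, ∀ ξ ∈ S.R, κ (sigmaRefl α ξ) = κ ξ)
    {g : EuclideanSpace ℝ (Fin N) ≃ₗᵢ[ℝ] EuclideanSpace ℝ (Fin N)}
    (hg : g ∈ S.W) (v : E) : Aop S κ (g v) = g (Aop S κ v) := by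
  induction hg using Subgroup.closure_induction generalizing v with
  | mem x hx =>
    obtain ⟨α, hα, hx⟩ := hx
    rw [hx]
    exact Aop_comm_refl S κ hκinv' hα v
  | one => simp
  | mul x z hx hz ihx ihz =>
    simp only [LinearIsometryEquiv.coe_mul, Function.comp_apply]
    rw [ihx (z v), ihz v]
  | inv x hx ih =>
    have := ih (x⁻¹ v)
    have hxx : x (x⁻¹ v) = v := by
      simp [LinearIsometryEquiv.apply_symm_apply]
    rw [hxx] at this
    have := congrArg (⇑x⁻¹) this
    simpa using this.symm

end Aop

section Schur
variable (S : DunklRootSystem N) (κ : EuclideanSpace ℝ (Fin N) → ℝ)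

lemma norm_sq_eq_sum_coord (α : E) : ⟪α, α⟫ = ∑ j : Fin N, α j * α j := by
  rw [PiLp.inner_apply]
  simp [RCLike.inner_apply, conj_trivial]
  exact Finset.sum_congr rfl fun j _ => sq (α j)

lemma Aop_eq_smul (hN : 1 ≤ N)
    (hκinv : ∀ α ∈ S.R, ∀ ξ ∈ S.R, κ (sigmaRefl α ξ) = κ ξ)
    (hirr : ∀ U : Submodule ℝ (EuclideanSpace ℝ (Fin N)),
      (∀ g ∈ S.W, ∀ u ∈ U, g u ∈ U) → U = ⊥ ∨ U = ⊤)
    (v : E) :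
    Aop S κ v = ((∑ α ∈ S.R, κ α) / (N : ℝ)) • v := by
  have hsym := Aop_symm S κ
  have hn : Module.finrank ℝ (EuclideanSpace ℝ (Fin N)) = N := finrank_euclideanSpace_fin
  set μ : ℝ := hsym.eigenvalues hn ⟨0, hN⟩ with hμ
  have hev := hsym.hasEigenvector_eigenvectorBasis hn ⟨0, hN⟩
  -- the eigenspace is W-invariant, hence everything
  set U : Submodule ℝ (EuclideanSpace ℝ (Fin N)) := Module.End.eigenspace (Aop S κ) μ with hU
  have hUinv : ∀ g ∈ S.W, ∀ u ∈ U, g u ∈ U := by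
    intro g hg u hu
    rw [hU, Module.End.mem_eigenspace_iff] at hu ⊢
    rw [Aop_comm_W S κ hκinv hg, hu, _root_.map_smul]
  have hUtop : U = ⊤ := by
    rcases hirr U hUinv with h | h
    · exfalso
      apply hev.2
      have hvU : (hsym.eigenvectorBasis hn) ⟨0, hN⟩ ∈ U := hev.1
      rwa [h, Submodule.mem_bot] at hvU
    · exact h
  have hall : ∀ w : E, Aop S κ w = μ • w := by
    intro w
    have : w ∈ U := hUtop ▸ Submodule.mem_top
    rwa [hU, Module.End.mem_eigenspace_iff] at this
  -- trace computation: μ * N = ∑ κ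
  have htr : μ * N = ∑ α ∈ S.R, κ α := by
    have h1 : ∀ j : Fin N,
        ⟪Aop S κ (EuclideanSpace.single j (1:ℝ)), EuclideanSpace.single j (1:ℝ)⟫
          = ∑ α ∈ S.R, κ α / ⟪α, α⟫ * (α j * α j) := by
      intro j
      rw [Aop_apply, sum_inner]
      refine Finset.sum_congr rfl fun α _ => ?_
      rw [real_inner_smul_left, EuclideanSpace.inner_single_right]
      simp only [starRingEnd_apply, star_trivial, one_mul]
      ring
    have h2 : ∀ j : Fin N,
        ⟪Aop S κ (EuclideanSpace.single j (1:ℝ)), EuclideanSpace.single j (1:ℝ)⟫ = μ := by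
      intro j
      rw [hall, real_inner_smul_left, EuclideanSpace.inner_single_right]
      simp [EuclideanSpace.single_apply]
    have h3 : ∑ j : Fin N, ∑ α ∈ S.R, κ α / ⟪α, α⟫ * (α j * α j) = ∑ α ∈ S.R, κ α := by
      rw [Finset.sum_comm]
      refine Finset.sum_congr rfl fun α hα => ?_
      rw [← Finset.mul_sum, ← norm_sq_eq_sum_coord,
        div_mul_cancel₀ _ (inner_self_ne_zero' (S.nonzero α hα))]
    calc μ * N = ∑ j : Fin N, μ := by simp [mul_comm]
    _ = ∑ j : Fin N, ⟪Aop S κ (EuclideanSpace.single j (1:ℝ)),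
          EuclideanSpace.single j (1:ℝ)⟫ := by simp_rw [h2]
    _ = ∑ α ∈ S.R, κ α := by simp_rw [h1]; exact h3
  have hNne : (N : ℝ) ≠ 0 := Nat.cast_ne_zero.2 (by omega)
  have : μ = (∑ α ∈ S.R, κ α) / (N : ℝ) := by
    field_simp
    linarith [htr]
  rw [← this]
  exact hall v

end Schur

section Key
variable (S : DunklRootSystem N) (κ : EuclideanSpace ℝ (Fin N) → ℝ)

lemma kappa_neg (hκinv : ∀ α ∈ S.R, ∀ ξ ∈ S.R, κ (sigmaRefl α ξ) = κ ξ)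
    {α : E} (hα : α ∈ S.R) : κ (-α) = κ α := by
  have := hκinv α hα α hα
  rwa [sigmaRefl_self (S.nonzero α hα)] at this

lemma key_identity (hN : 1 ≤ N)
    (hκinv : ∀ α ∈ S.R, ∀ ξ ∈ S.R, κ (sigmaRefl α ξ) = κ ξ)
    (hirr : ∀ U : Submodule ℝ (EuclideanSpace ℝ (Fin N)),
      (∀ g ∈ S.W, ∀ u ∈ U, g u ∈ U) → U = ⊥ ∨ U = ⊤)
    (y : E) (j : Fin N) :
    ∑ α ∈ S.pos, κ α / ⟪α, α⟫ * ⟪α, y⟫ * α j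
      = ((∑ α ∈ S.pos, κ α) / (N : ℝ)) * y j := by
  have hA := Aop_eq_smul S κ hN hκinv hirr y
  rw [Aop_apply] at hA
  have hFeven : ∀ α ∈ S.R, (κ (-α) / ⟪-α, -α⟫ * ⟪-α, y⟫) • (-α : E)
      = (κ α / ⟪α, α⟫ * ⟪α, y⟫) • α := by
    intro α hα
    rw [kappa_neg S κ hκinv hα, inner_neg_neg, inner_neg_left, smul_neg, mul_neg, neg_smul,
      neg_neg]
  have hsplit := sum_R_eq S (fun α => (κ α / ⟪α, α⟫ * ⟪α, y⟫) • α) hFeven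
  have hκsplit := sum_R_eq S κ (fun α hα => kappa_neg S κ hκinv hα)
  rw [hsplit, hκsplit] at hA
  have := congrFun (congrArg (fun (v : E) => (v : Fin N → ℝ)) hA) j
  simp only [PiLp.add_apply, PiLp.smul_apply, smul_eq_mul] at this
  rw [WithLp.ofLp_sum, Finset.sum_apply] at this
  simp only [PiLp.smul_apply, smul_eq_mul] at this
  linear_combination this / 2

end Key
end Aux

/-- For `D(x,y) = exp(|x|²|y|²/(2γ))(1 + a⟪x,y⟫)`, with `Span(R) = ℝ^N` and
`W` acting irreducibly, the Dunkl operator in `x` satisfies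
`T_i D = [x_i(|y|²/γ)(1 + a⟪x,y⟫) + a(1 + βγ/N) y_i] exp(|x|²|y|²/(2γ))` at regular points. -/
theorem statement9 {N : ℕ} (hN : 1 ≤ N) (S : DunklRootSystem N)
    (κ : EuclideanSpace ℝ (Fin N) → ℝ)
    (hκpos : ∀ α ∈ S.R, 0 < κ α)
    (hκinv : ∀ α ∈ S.R, ∀ ξ ∈ S.R, κ (sigmaRefl α ξ) = κ ξ)
    (hspan : Submodule.span ℝ (S.R : Set (EuclideanSpace ℝ (Fin N))) = ⊤)
    (hirr : ∀ U : Submodule ℝ (EuclideanSpace ℝ (Fin N)),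
      (∀ g ∈ S.W, ∀ u ∈ U, g u ∈ U) → U = ⊥ ∨ U = ⊤)
    (β : ℝ) (hβ : 0 < β) (a : ℝ) (y : EuclideanSpace ℝ (Fin N))
    (x : EuclideanSpace ℝ (Fin N)) (hx : ∀ α ∈ S.pos, ⟪α, x⟫ ≠ 0) (i : Fin N) :
    dunklT S κ β i
        (fun z => Real.exp (‖z‖ ^ 2 * ‖y‖ ^ 2 / (2 * ∑ α' ∈ S.pos, κ α')) * (1 + a * ⟪z, y⟫)) x
      = (x i * (‖y‖ ^ 2 / ∑ α' ∈ S.pos, κ α') * (1 + a * ⟪x, y⟫) +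
            a * (1 + β * (∑ α' ∈ S.pos, κ α') / (N : ℝ)) * y i) *
          Real.exp (‖x‖ ^ 2 * ‖y‖ ^ 2 / (2 * ∑ α' ∈ S.pos, κ α')) := by
  classical
  set γ : ℝ := ∑ α' ∈ S.pos, κ α' with hγdef
  -- γ > 0
  have hRne : S.R.Nonempty := by
    by_contra h
    rw [Finset.not_nonempty_iff_eq_empty] at h
    rw [h] at hspan
    simp only [Finset.coe_empty, Submodule.span_empty] at hspan
    have h0 : (EuclideanSpace.single (⟨0, hN⟩ : Fin N) (1:ℝ)) ∈ (⊥ : Submodule ℝ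
        (EuclideanSpace ℝ (Fin N))) := hspan ▸ Submodule.mem_top
    rw [Submodule.mem_bot] at h0
    have := congrFun (congrArg (fun (v : EuclideanSpace ℝ (Fin N)) => (v : Fin N → ℝ)) h0)
      ⟨0, hN⟩
    simp [EuclideanSpace.single_apply] at this
  have hposne : S.pos.Nonempty := by
    obtain ⟨α, hα⟩ := hRne
    rcases lt_or_gt_of_ne (S.m_transverse α hα) with h | h
    · exact ⟨-α, by
        rw [DunklRootSystem.pos, Finset.mem_filter]
        exact ⟨neg_mem_R S hα, by rw [inner_neg_left]; linarith⟩⟩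
    · exact ⟨α, by rw [DunklRootSystem.pos, Finset.mem_filter]; exact ⟨hα, h⟩⟩
  have hposR : ∀ α ∈ S.pos, α ∈ S.R := fun α hα => (Finset.mem_filter.1 hα).1
  have hγpos : 0 < γ := Finset.sum_pos (fun α hα => hκpos α (hposR α hα)) hposne
  have hγne : γ ≠ 0 := ne_of_gt hγpos
  have hNne : (N : ℝ) ≠ 0 := Nat.cast_ne_zero.2 (by omega)
  set Ex : ℝ := Real.exp (‖x‖ ^ 2 * ‖y‖ ^ 2 / (2 * γ)) with hEx
  -- the derivative part
  have h0 : HasFDerivAt (fun z : EuclideanSpace ℝ (Fin N) => ‖z‖ ^ 2)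
      (2 • innerSL ℝ x) x := by
    simpa using (hasFDerivAt_id x).norm_sq
  have h1 : HasFDerivAt (fun z : EuclideanSpace ℝ (Fin N) => ‖z‖ ^ 2 * ‖y‖ ^ 2 / (2 * γ))
      (((2 * γ)⁻¹ * ‖y‖ ^ 2 * 2) • innerSL ℝ x) x := by
    simp only [div_eq_mul_inv]
    have := (h0.mul_const (‖y‖ ^ 2)).mul_const ((2 * γ)⁻¹)
    refine this.congr_fderiv ?_
    ext v
    simp
    ring
  have h2 : HasFDerivAt (fun z : EuclideanSpace ℝ (Fin N) =>
      Real.exp (‖z‖ ^ 2 * ‖y‖ ^ 2 / (2 * γ)))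
      (Ex • (((2 * γ)⁻¹ * ‖y‖ ^ 2 * 2) • innerSL ℝ x)) x := h1.exp
  have h3 : HasFDerivAt (fun z : EuclideanSpace ℝ (Fin N) => 1 + a * ⟪z, y⟫)
      (a • innerSL ℝ y) x := by
    have hi : HasFDerivAt (fun z : EuclideanSpace ℝ (Fin N) => ⟪z, y⟫) (innerSL ℝ y) x := by
      have hfun : (fun z : EuclideanSpace ℝ (Fin N) => ⟪z, y⟫)
          = fun z => (innerSL ℝ y) z := by
        funext z
        simp only [innerSL_apply_apply]
        exact real_inner_comm _ _
      rw [hfun]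
      exact (innerSL ℝ y).hasFDerivAt
    simpa using (hi.const_mul a).const_add 1
  have hf : HasFDerivAt (fun z : EuclideanSpace ℝ (Fin N) =>
      Real.exp (‖z‖ ^ 2 * ‖y‖ ^ 2 / (2 * γ)) * (1 + a * ⟪z, y⟫))
      ((1 + a * ⟪x, y⟫) • (Ex • (((2 * γ)⁻¹ * ‖y‖ ^ 2 * 2) • innerSL ℝ x))
        + Ex • (a • innerSL ℝ y)) x := by
    have := h2.mul h3
    refine this.congr_fderiv ?_
    ext v
    simp [Ex]
    try ring
  have hderiv : fderiv ℝ (fun z : EuclideanSpace ℝ (Fin N) =>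
      Real.exp (‖z‖ ^ 2 * ‖y‖ ^ 2 / (2 * γ)) * (1 + a * ⟪z, y⟫)) x
      (EuclideanSpace.single i 1)
      = (1 + a * ⟪x, y⟫) * (Ex * ((2 * γ)⁻¹ * ‖y‖ ^ 2 * 2 * x i)) + Ex * (a * y i) := by
    rw [hf.fderiv]
    simp only [ContinuousLinearMap.add_apply, ContinuousLinearMap.smul_apply, smul_eq_mul,
      innerSL_apply_apply, EuclideanSpace.inner_single_right, starRingEnd_apply, star_trivial,
      one_mul]
    try ring
  -- the reflection part
  have hterm : ∀ α ∈ S.pos, α i * κ α *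
      ((Real.exp (‖x‖ ^ 2 * ‖y‖ ^ 2 / (2 * γ)) * (1 + a * ⟪x, y⟫)
        - Real.exp (‖sigmaRefl α x‖ ^ 2 * ‖y‖ ^ 2 / (2 * γ)) * (1 + a * ⟪sigmaRefl α x, y⟫))
        / ⟪α, x⟫)
      = (2 * a * Ex) * (κ α / ⟪α, α⟫ * ⟪α, y⟫ * α i) := by
    intro α hα
    have hαR := hposR α hα
    have hαne := S.nonzero α hαR
    have hαx := hx α hα
    have hαA := inner_self_ne_zero' hαne
    have hnorm : ‖sigmaRefl α x‖ = ‖x‖ := sigmaRefl_norm hαne x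
    have hinner : ⟪sigmaRefl α x, y⟫ = ⟪x, y⟫ - 2 * ⟪α, x⟫ / ⟪α, α⟫ * ⟪α, y⟫ := by
      rw [sigmaRefl, inner_sub_left, real_inner_smul_left]
    rw [hnorm, hinner, ← hEx]
    generalize hq : ⟪α, x⟫ = q at hαx ⊢
    generalize ⟪α, α⟫ = A at hαA ⊢
    field_simp
    ring
  have hsum : ∑ α ∈ S.pos, α i * κ α *
      ((Real.exp (‖x‖ ^ 2 * ‖y‖ ^ 2 / (2 * γ)) * (1 + a * ⟪x, y⟫)
        - Real.exp (‖sigmaRefl α x‖ ^ 2 * ‖y‖ ^ 2 / (2 * γ)) * (1 + a * ⟪sigmaRefl α x, y⟫))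
        / ⟪α, x⟫)
      = (2 * a * Ex) * ((γ / (N : ℝ)) * y i) := by
    rw [Finset.sum_congr rfl hterm, ← Finset.mul_sum,
      key_identity S κ hN hκinv hirr y i]
  rw [dunklT]
  rw [hderiv, hsum]
  rw [hEx]
  field_simp
  ring
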